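/- Let (m₂, m₃) solve m₂' = -2m₃, m₃' = -(1/2)m₂² on an interval, with initial data satisfying m₂(0) > (6 m₃(0)²)^{1/3} (i.e., 6m₃(0)² < m₂(0)³). Then the solution cannot be extended globally in time: it blows up in finite time. -/

import Mathlib

set_option maxHeartbeats 1000000

lemma incrOn (f f' : ℝ → ℝ) {s : Set ℝ} (hs : Convex ℝ s)
    (hf : ∀ t ∈ s, HasDerivAt f (f' t) t)
    (h0 : ∀ t ∈ s, 0 ≤ f' t) : MonotoneOn f s := by
  apply monotoneOn_of_deriv_nonneg hs
  · exact fun t ht => (hf t ht).continuousAt.continuousWithinAt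
  · intro t ht
    exact ((hf t (interior_subset ht)).differentiableAt).differentiableWithinAt
  · intro t ht
    rw [(hf t (interior_subset ht)).deriv]
    exact h0 t (interior_subset ht)

lemma lin_lb (f f' : ℝ → ℝ) (C T : ℝ)
    (hf : ∀ t ∈ Set.Ici T, HasDerivAt f (f' t) t)
    (hC : ∀ t ∈ Set.Ici T, C ≤ f' t) :
    ∀ t, T ≤ t → f T + C * (t - T) ≤ f t := by
  intro t ht
  have hm := incrOn (fun u => f u - C * u) (fun u => f' u - C) (convex_Ici T)
    (fun u hu => by
      have h1 : HasDerivAt (fun u : ℝ => C * u) C u := by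
        simpa using (hasDerivAt_id u).const_mul C
      exact (hf u hu).sub h1)
    (fun u hu => by
      show (0:ℝ) ≤ f' u - C
      linarith [hC u hu])
  have := hm (Set.self_mem_Ici) ht ht
  simp only at this
  linarith

lemma lin_ub (f f' : ℝ → ℝ) (C T : ℝ)
    (hf : ∀ t ∈ Set.Ici T, HasDerivAt f (f' t) t)
    (hC : ∀ t ∈ Set.Ici T, f' t ≤ C) :
    ∀ t, T ≤ t → f t ≤ f T + C * (t - T) := by
  intro t ht
  have := lin_lb (fun u => -f u) (fun u => -(f' u)) (-C) T
    (fun u hu => (hf u hu).neg)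
    (fun u hu => by
      show -C ≤ -(f' u)
      linarith [hC u hu]) t ht
  linarith

/-- Finite-time blowup for supercritical data of the 3D trace dynamics:
no global-in-time solution exists when `m₂(0)³ > 6 m₃(0)²`. -/
theorem stmt_7 (m2 m3 : ℝ → ℝ)
    (h2 : ∀ t : ℝ, 0 ≤ t → HasDerivAt m2 (-2 * m3 t) t)
    (h3 : ∀ t : ℝ, 0 ≤ t → HasDerivAt m3 (-(1/2) * (m2 t)^2) t)
    (hinit : 6 * (m3 0)^2 < (m2 0)^3) :
    False := by
  obtain ⟨E, hE, hEeq⟩ : ∃ E : ℝ, 0 < E ∧ (m2 0)^3 - 6*(m3 0)^2 = E :=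
    ⟨_, by linarith, rfl⟩
  -- conservation law
  have hcons : ∀ t, 0 ≤ t → (m2 t)^3 - 6*(m3 t)^2 = E := by
    have hd : ∀ t ∈ Set.Ici (0:ℝ), HasDerivAt (fun u => (m2 u)^3 - 6*(m3 u)^2) 0 t := by
      intro t ht
      have d2 := (h2 t ht).pow 3
      have d3 := ((h3 t ht).pow 2).const_mul (6:ℝ)
      have := HasDerivAt.sub (f := fun u => m2 u ^ 3) (g := fun u => 6 * m3 u ^ 2) d2 d3
      refine this.congr_deriv ?_
      push_cast
      ring
    have hup := incrOn _ (fun _ => (0:ℝ)) (convex_Ici 0) hd (fun _ _ => le_refl 0)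
    have hdn := incrOn (fun u => -((m2 u)^3 - 6*(m3 u)^2)) (fun _ => (0:ℝ)) (convex_Ici 0)
        (fun t ht => by have := (hd t ht).neg; rw [neg_zero] at this; exact this) (fun _ _ => le_refl 0)
    intro t ht
    have a := hup Set.self_mem_Ici ht ht
    have b := hdn Set.self_mem_Ici ht ht
    simp only at a b
    linarith
  -- positivity and lower bound on m2
  obtain ⟨c, hc, hc3⟩ : ∃ c : ℝ, 0 < c ∧ c^3 ≤ E := by
    refine ⟨min 1 E, lt_min one_pos hE, ?_⟩
    rcases le_total (1:ℝ) E with h | h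
    · have h1 : min 1 E = 1 := min_eq_left h
      rw [h1]; linarith
    · have h1 : min 1 E = E := min_eq_right h
      rw [h1]
      nlinarith [mul_nonneg (sub_nonneg.mpr h) hE.le,
        mul_nonneg (sub_nonneg.mpr h) (sq_nonneg E)]
  have hm2lb : ∀ t, 0 ≤ t → c ≤ m2 t := by
    intro t ht
    have hcube : c^3 ≤ (m2 t)^3 := by
      have := hcons t ht
      nlinarith [sq_nonneg (m3 t)]
    have hpos : 0 < m2 t := by nlinarith [hcons t ht, sq_nonneg (m3 t), sq_nonneg (m2 t)]
    exact le_of_pow_le_pow_left₀ three_ne_zero hpos.le hcube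
  -- m3 decreases linearly
  have hm3ub : ∀ t, 0 ≤ t → m3 t ≤ m3 0 + (-(1/2)*c^2) * (t - 0) := by
    apply lin_ub m3 (fun u => -(1/2)*(m2 u)^2)
    · exact fun u hu => h3 u hu
    · intro u hu
      have := hm2lb u hu
      show -(1/2)*(m2 u)^2 ≤ -(1/2)*c^2
      nlinarith
  obtain ⟨T, hT0, hTlarge⟩ : ∃ T : ℝ, 0 ≤ T ∧ (2*(m3 0) + 2)/c^2 ≤ T :=
    ⟨max 0 _, le_max_left _ _, le_max_right _ _⟩
  have hm3T : m3 T ≤ -1 := by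
    have h1 := hm3ub T hT0
    have hc2 : 0 < c^2 := by positivity
    have : (2*(m3 0) + 2) ≤ T * c^2 := by
      rw [div_le_iff₀ hc2] at hTlarge
      linarith
    nlinarith
  -- m3 stays ≤ -1 after T
  have hm3dec : ∀ t, T ≤ t → m3 t ≤ -1 := by
    intro t ht
    have := lin_ub m3 (fun u => -(1/2)*(m2 u)^2) 0 T
      (fun u hu => h3 u (le_trans hT0 hu))
      (fun u hu => by
        show -(1/2)*(m2 u)^2 ≤ 0
        nlinarith [sq_nonneg (m2 u)]) t ht
    linarith
  -- m2 grows linearly after T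
  have hm2gr : ∀ t, T ≤ t → m2 T + 2*(t - T) ≤ m2 t := by
    apply lin_lb m2 (fun u => -2 * m3 u)
    · exact fun u hu => h2 u (le_trans hT0 hu)
    · intro u hu
      have := hm3dec u hu
      show (2:ℝ) ≤ -2 * m3 u
      linarith
  obtain ⟨d, hd1, hd3⟩ : ∃ d : ℝ, 1 ≤ d ∧ 2*E ≤ d^3 := by
    refine ⟨max 1 (2*E), le_max_left _ _, ?_⟩
    have h1 : (1:ℝ) ≤ max 1 (2*E) := le_max_left _ _
    have h2' : 2*E ≤ max 1 (2*E) := le_max_right _ _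
    nlinarith [mul_nonneg (mul_nonneg (sub_nonneg.mpr h1) (by linarith : (0:ℝ) ≤ max 1 (2*E)))
      (by linarith : (0:ℝ) ≤ max 1 (2*E) + 1)]
  obtain ⟨T', hTT', hT'big⟩ : ∃ T' : ℝ, T ≤ T' ∧ d + |m2 T| ≤ 2*(T' - T) :=
    ⟨T + (d + |m2 T|)/2, by linarith [abs_nonneg (m2 T)], by linarith⟩
  have hT'0 : (0:ℝ) ≤ T' := le_trans hT0 hTT'
  have hm2big : ∀ t, T' ≤ t → d ≤ m2 t := by
    intro t ht
    have h1 := hm2gr t (le_trans hTT' ht)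
    have h2' : -|m2 T| ≤ m2 T := neg_abs_le _
    have h3' : T' - T ≤ t - T := by linarith
    linarith
  -- the Lyapunov function v = 1/sqrt(m2)
  have hr : 0 < Real.sqrt 3 := Real.sqrt_pos.mpr (by norm_num)
  have hr2 : (Real.sqrt 3)^2 = 3 := Real.sq_sqrt (by norm_num)
  have hvderiv : ∀ t ∈ Set.Ici T', HasDerivAt (fun u => (Real.sqrt (m2 u))⁻¹)
      (-((-2*m3 t) / (2*Real.sqrt (m2 t))) / (Real.sqrt (m2 t))^2) t := by
    intro t ht
    have ht0 : (0:ℝ) ≤ t := le_trans hT'0 ht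
    have hpos : 0 < m2 t := lt_of_lt_of_le hc (hm2lb t ht0)
    have hsq := (h2 t ht0).sqrt (ne_of_gt hpos)
    exact hsq.inv (ne_of_gt (Real.sqrt_pos.mpr hpos))
  have hvbound : ∀ t ∈ Set.Ici T',
      -((-2*m3 t) / (2*Real.sqrt (m2 t))) / (Real.sqrt (m2 t))^2
        ≤ -(1/(2*Real.sqrt 3)) := by
    intro t ht
    have ht0 : (0:ℝ) ≤ t := le_trans hT'0 ht
    have hpos : 0 < m2 t := lt_of_lt_of_le hc (hm2lb t ht0)
    obtain ⟨s, hsdef⟩ : ∃ s : ℝ, Real.sqrt (m2 t) = s := ⟨_, rfl⟩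
    have hs : 0 < s := hsdef ▸ Real.sqrt_pos.mpr hpos
    have hs2 : s^2 = m2 t := by rw [← hsdef]; exact Real.sq_sqrt hpos.le
    obtain ⟨A, hAdef⟩ : ∃ A : ℝ, -2 * m3 t = A := ⟨_, rfl⟩
    have hA : 2 ≤ A := by
      have := hm3dec t (le_trans hTT' ht)
      rw [← hAdef]; linarith
    obtain ⟨r, hrdef⟩ : ∃ r : ℝ, Real.sqrt 3 = r := ⟨_, rfl⟩
    have hrp : 0 < r := hrdef ▸ hr
    have hrr : r^2 = 3 := by rw [← hrdef]; exact hr2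
    rw [hsdef, hAdef, hrdef]
    -- key: m2 * s ≤ r * A  (from squares)
    have hkey : m2 t * s ≤ r * A := by
      have hm2d : d ≤ m2 t := hm2big t ht
      have hd3' : d^3 ≤ (m2 t)^3 :=
        pow_le_pow_left₀ (by linarith) hm2d 3
      have hm2c : (2*E) ≤ (m2 t)^3 := le_trans hd3 hd3'
      have hsqs : (m2 t * s)^2 ≤ (r * A)^2 := by
        have hA2 : A^2 = 4 * (m3 t)^2 := by rw [← hAdef]; ring
        have hc' := hcons t ht0
        have he : (m2 t * s)^2 = (m2 t)^3 := by rw [mul_pow, hs2]; ring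
        rw [he, mul_pow, hrr, hA2]
        nlinarith
      nlinarith [mul_pos hpos hs, mul_pos hrp (by linarith : (0:ℝ) < A),
        sq_nonneg (m2 t * s - r * A), sq_nonneg (m2 t * s + r * A)]
    rw [neg_div, div_div]
    apply neg_le_neg
    have hp1 : (0:ℝ) < 2*r := by linarith
    have hp2 : (0:ℝ) < 2*s*s^2 := by positivity
    rw [div_le_div_iff₀ hp1 hp2]
    have hss : s * s^2 = m2 t * s := by rw [hs2]; ring
    nlinarith
  -- linear decay of v leads to contradiction
  have hvlin := lin_ub (fun u => (Real.sqrt (m2 u))⁻¹)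
      (fun t => -((-2*m3 t) / (2*Real.sqrt (m2 t))) / (Real.sqrt (m2 t))^2)
      (-(1/(2*Real.sqrt 3))) T' hvderiv hvbound
  obtain ⟨V, hVdef⟩ : ∃ V : ℝ, (Real.sqrt (m2 T'))⁻¹ = V := ⟨_, rfl⟩
  have hVnn : 0 ≤ V := by rw [← hVdef]; positivity
  obtain ⟨t1, ht1, ht1eq⟩ : ∃ t1 : ℝ, T' ≤ t1 ∧ t1 - T' = (V + 1) * (2*Real.sqrt 3) :=
    ⟨T' + (V + 1) * (2*Real.sqrt 3), by nlinarith, by ring⟩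
  have hfinal := hvlin t1 ht1
  rw [hVdef, ht1eq] at hfinal
  have hcalc : V + (-(1/(2*Real.sqrt 3))) * ((V + 1) * (2*Real.sqrt 3)) = -1 := by
    field_simp
    ring
  rw [hcalc] at hfinal
  have hvpos : 0 < (Real.sqrt (m2 t1))⁻¹ := by
    have ht10 : (0:ℝ) ≤ t1 := le_trans hT'0 ht1
    have : 0 < m2 t1 := lt_of_lt_of_le hc (hm2lb t1 ht10)
    positivity
  linarith
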